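/- Assume V is linearly ordered (vertex IDs) and that w(u,v) ≠ 0 for all u, v ∈ V (all edge weights are positive). Fix c ∈ V, and suppose that for each x ∈ V with δ(x,c) < ∞ we are given a walk π_x from x to c such that: (i) for every vertex v on π_x, the prefix of π_x from x to v has weight δ(x,v) (in particular π_x has weight δ(x,c)); and (ii) for every vertex v on π_x other than x, the vertex u immediately preceding v on π_x is the minimum element, in the order on V, of the set {u' ∈ V : δ(x,u') + w(u',v) = δ(x,v)}. Let T be the set of all directed edges (a,b) that lie on some π_x. Then T is an in-tree rooted at c: for all such x, y and every vertex z lying on both π_x and π_y, the suffix of π_x from z to c equals the suffix of π_y from z to c; consequently, every vertex other than c that is the tail of an edge of T is the tail of exactly one edge of T. -/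

import Mathlib

open scoped ENNReal BigOperators

/-- The weight of a walk, given as the list of vertices it visits (in order):
the sum of the edge weights of consecutive pairs. A single vertex has weight 0. -/
noncomputable def walkWeight {V : Type*} (w : V → V → ℝ≥0∞) (p : List V) : ℝ≥0∞ :=
  (List.zipWith w p p.tail).sum

/-- `p` is a walk from `u` to `v`: a nonempty list of vertices starting at `u`
and ending at `v`. -/
def IsWalk {V : Type*} (u v : V) (p : List V) : Prop :=
  p.head? = some u ∧ p.getLast? = some v

/-- Shortest-path distance: infimum of walk weights over all walks from `u` to `v`
(`∞` if there is no walk). -/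
noncomputable def delta {V : Type*} (w : V → V → ℝ≥0∞) (u v : V) : ℝ≥0∞ :=
  ⨅ p ∈ {p : List V | IsWalk u v p}, walkWeight w p

/-- `h`-hop shortest-path distance: infimum of walk weights over all walks from `u`
to `v` with at most `h` edges (`∞` if there is no such walk). -/
noncomputable def deltaH {V : Type*} (w : V → V → ℝ≥0∞) (h : ℕ) (u v : V) : ℝ≥0∞ :=
  ⨅ p ∈ {p : List V | IsWalk u v p ∧ p.length ≤ h + 1}, walkWeight w p

section helpers
variable {V : Type*} (w : V → V → ℝ≥0∞)

lemma walkWeight_cons_cons (a b : V) (l : List V) :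
    walkWeight w (a :: b :: l) = w a b + walkWeight w (b :: l) := by
  simp [walkWeight]

lemma walkWeight_singleton (a : V) : walkWeight w [a] = 0 := by simp [walkWeight]

lemma walkWeight_append_last : ∀ (p : List V) (u v : V), p.getLast? = some u →
    walkWeight w (p ++ [v]) = walkWeight w p + w u v
  | [], u, v, h => by simp at h
  | [a], u, v, h => by
      simp only [List.getLast?_singleton, Option.some_inj] at h
      subst h
      simp [walkWeight]
  | a :: b :: t, u, v, h => by
      have h' : (b :: t).getLast? = some u := by
        rwa [List.getLast?_cons_cons] at h
      have ih := walkWeight_append_last (b :: t) u v h'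
      simp only [List.cons_append, walkWeight_cons_cons]
      rw [List.cons_append] at ih
      rw [ih, add_assoc]

lemma walkWeight_concat : ∀ (p q : List V) (u : V), p.getLast? = some u → q.head? = some u →
    walkWeight w (p ++ q.tail) = walkWeight w p + walkWeight w q
  | [], q, u, h, _ => by simp at h
  | [a], q, u, h, hq => by
      simp only [List.getLast?_singleton, Option.some_inj] at h
      subst h
      have hq' : a :: q.tail = q := List.cons_head?_tail (Option.mem_def.mpr hq)
      rw [List.singleton_append, hq', walkWeight_singleton, zero_add]
  | a :: b :: t, q, u, h, hq => by
      have h' : (b :: t).getLast? = some u := by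
        rwa [List.getLast?_cons_cons] at h
      have ih := walkWeight_concat (b :: t) q u h' hq
      simp only [List.cons_append, walkWeight_cons_cons]
      rw [List.cons_append] at ih
      rw [ih, add_assoc]

lemma delta_le_walkWeight {u v : V} {p : List V} (hp : IsWalk u v p) :
    delta w u v ≤ walkWeight w p :=
  iInf₂_le p hp

lemma delta_self (z : V) : delta w z z = 0 := by
  refine le_antisymm ?_ (zero_le)
  have h := delta_le_walkWeight w (u := z) (v := z) (p := [z]) ⟨rfl, rfl⟩
  simpa [walkWeight_singleton] using h

lemma isWalk_append {x u v : V} {p q : List V} (hp : IsWalk x u p) (hq : IsWalk u v q) :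
    IsWalk x v (p ++ q.tail) := by
  obtain ⟨hp1, hp2⟩ := hp
  obtain ⟨hq1, hq2⟩ := hq
  constructor
  · rcases p with _ | ⟨a, p⟩
    · simp at hp1
    · simpa using hp1
  · rcases q with _ | ⟨b, q⟩
    · simp at hq1
    · rcases q with _ | ⟨d, q⟩
      · have h1 : b = u := by simpa using hq1
        have h2 : b = v := by simpa using hq2
        simp only [List.tail_cons, List.append_nil]
        rw [hp2, ← h1, h2]
      · rw [List.tail_cons, List.getLast?_append_of_ne_nil (l₁ := p) (show (d :: q) ≠ [] by simp)]
        rwa [List.getLast?_cons_cons] at hq2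

lemma delta_triangle (x u v : V) : delta w x v ≤ delta w x u + delta w u v := by
  unfold delta
  rw [ENNReal.iInf_add]
  refine le_iInf fun p => ?_
  rw [ENNReal.iInf_add]
  refine le_iInf fun hp => ?_
  rw [ENNReal.add_iInf]
  refine le_iInf fun q => ?_
  rw [ENNReal.add_iInf]
  refine le_iInf fun hq => ?_
  have hwk : IsWalk x v (p ++ q.tail) := isWalk_append hp hq
  calc (⨅ r ∈ {r : List V | IsWalk x v r}, walkWeight w r)
      ≤ walkWeight w (p ++ q.tail) := iInf₂_le _ hwk
    _ = walkWeight w p + walkWeight w q := walkWeight_concat w p q u hp.2 hq.1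

lemma delta_triangle_edge (x u v : V) : delta w x v ≤ delta w x u + w u v := by
  unfold delta
  rw [ENNReal.iInf_add]
  refine le_iInf fun p => ?_
  rw [ENNReal.iInf_add]
  refine le_iInf fun hp => ?_
  have hwk : IsWalk x v (p ++ [v]) := by
    refine ⟨?_, by simp [List.getLast?_concat]⟩
    rcases p with _ | ⟨a, p⟩
    · exact absurd hp.1 (by simp)
    · simpa using hp.1
  calc (⨅ r ∈ {r : List V | IsWalk x v r}, walkWeight w r)
      ≤ walkWeight w (p ++ [v]) := iInf₂_le _ hwk
    _ = walkWeight w p + w u v := walkWeight_append_last w p u v hp.2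

end helpers

/-- With positive edge weights and min-ID tie-breaking for parents,
the union of the shortest walks `π_x` from each `x` to a fixed vertex `c` forms an
in-tree rooted at `c`: any two of these walks agree from any common vertex onwards,
and hence every vertex other than `c` that is the tail of an edge of the union is
the tail of exactly one such edge. -/
theorem shortest_paths_to_c_form_in_tree
    {V : Type*} [Fintype V] [Nonempty V] [LinearOrder V]
    (w : V → V → ℝ≥0∞) (hw : ∀ u v : V, w u v ≠ 0)
    (c : V) (π : V → List V)
    -- `π_x` is a walk from `x` to `c` whenever `δ(x,c) < ∞`
    (hwalk : ∀ x : V, delta w x c ≠ ⊤ → IsWalk x c (π x))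
    -- (i) every prefix of `π_x`, ending at a vertex `v`, has weight `δ(x,v)`
    (hprefix : ∀ x : V, delta w x c ≠ ⊤ → ∀ i : ℕ, ∀ hi : i < (π x).length,
      walkWeight w ((π x).take (i + 1)) = delta w x ((π x).get ⟨i, hi⟩))
    -- (ii) each vertex on `π_x` other than `x` is preceded by the minimum-ID vertex
    -- `u'` satisfying `δ(x,u') + w(u',v) = δ(x,v)`
    (htie : ∀ x : V, delta w x c ≠ ⊤ → ∀ i : ℕ, ∀ hi : i + 1 < (π x).length,
      IsLeast {u' : V |
          delta w x u' + w u' ((π x).get ⟨i + 1, hi⟩) = delta w x ((π x).get ⟨i + 1, hi⟩)}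
        ((π x).get ⟨i, Nat.lt_of_succ_lt hi⟩)) :
    -- `T` is an in-tree rooted at `c`:
    -- any two walks `π_x`, `π_y` agree from any common vertex `z` onwards, …
    (∀ x y : V, delta w x c ≠ ⊤ → delta w y c ≠ ⊤ →
      ∀ i : ℕ, ∀ hix : i < (π x).length, ∀ j : ℕ, ∀ hjy : j < (π y).length,
        (π x).get ⟨i, hix⟩ = (π y).get ⟨j, hjy⟩ →
        (π x).drop i = (π y).drop j) ∧
    -- … and consequently every vertex `a ≠ c` that is the tail of an edge of
    -- `T = ⋃_x {edges of π_x}` is the tail of exactly one edge of `T`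
    (∀ a : V, a ≠ c → ∀ b₁ b₂ : V,
      (∃ x : V, delta w x c ≠ ⊤ ∧ (a, b₁) ∈ List.zipWith Prod.mk (π x) (π x).tail) →
      (∃ y : V, delta w y c ≠ ⊤ ∧ (a, b₂) ∈ List.zipWith Prod.mk (π y) (π y).tail) →
      b₁ = b₂) := by
  classical
  have hne : ∀ x, delta w x c ≠ ⊤ → π x ≠ [] := by
    intro x hx h
    have := (hwalk x hx).1
    rw [h] at this
    simp at this
  have hpre : ∀ x (hx : delta w x c ≠ ⊤) (i : ℕ) (hi : i < (π x).length),
      walkWeight w ((π x).take (i + 1)) = delta w x ((π x)[i]) := by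
    intro x hx i hi
    simpa using hprefix x hx i hi
  have hlast : ∀ x (hx : delta w x c ≠ ⊤),
      (π x)[(π x).length - 1]'(by
        have := List.length_pos_iff.mpr (hne x hx); omega) = c := by
    intro x hx
    have hn : 0 < (π x).length := List.length_pos_iff.mpr (hne x hx)
    have h2 : (π x)[(π x).length - 1]? = some c := by
      rw [← List.getLast?_eq_getElem?]; exact (hwalk x hx).2
    rwa [List.getElem?_eq_getElem (by omega), Option.some_inj] at h2
  -- the step relation along π x
  have hstep : ∀ x (hx : delta w x c ≠ ⊤) (i : ℕ) (hi : i + 1 < (π x).length),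
      delta w x ((π x)[i + 1]) = delta w x ((π x)[i]'(by omega)) +
        w ((π x)[i]'(by omega)) ((π x)[i + 1]) := by
    intro x hx i hi
    have h1 := hpre x hx i (by omega)
    have h2 := hpre x hx (i + 1) hi
    have htake : (π x).take (i + 2) = (π x).take (i + 1) ++ [(π x)[i + 1]] := by
      rw [List.take_succ, List.getElem?_eq_getElem hi]; rfl
    have hlastq : ((π x).take (i + 1)).getLast? = some ((π x)[i]'(by omega)) := by
      rw [List.take_succ, List.getElem?_eq_getElem (show i < (π x).length by omega)]
      exact List.getLast?_concat
    rw [← h2, htake, walkWeight_append_last w _ _ _ hlastq, h1]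
  -- finiteness of delta along π x
  have hfin : ∀ x (hx : delta w x c ≠ ⊤) (i : ℕ) (hi : i < (π x).length),
      delta w x ((π x)[i]) ≠ ⊤ := by
    intro x hx
    have key : ∀ m, ∀ i (hi : i < (π x).length), (π x).length - 1 - i ≤ m →
        delta w x ((π x)[i]) ≠ ⊤ := by
      intro m
      induction m with
      | zero =>
        intro i hi h0
        have hie : i = (π x).length - 1 := by omega
        subst hie
        rw [hlast x hx]; exact hx
      | succ m ih =>
        intro i hi h
        by_cases hc : i = (π x).length - 1
        · subst hc; rw [hlast x hx]; exact hx
        · have hi1 : i + 1 < (π x).length := by omega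
          have hs := hstep x hx i hi1
          have h2 := ih (i + 1) hi1 (by omega)
          intro htop
          exact h2 (by rw [hs, htop, top_add])
    intro i hi
    exact key ((π x).length - 1 - i) i hi le_rfl
  -- strict monotonicity of delta along π x
  have hlt : ∀ x (hx : delta w x c ≠ ⊤) (i j : ℕ) (hj : j < (π x).length) (hij : i < j),
      delta w x ((π x)[i]'(by omega)) < delta w x ((π x)[j]) := by
    intro x hx i j hj hij
    induction j with
    | zero => omega
    | succ j ih =>
      have hj' : j < (π x).length := by omega
      have hlt1 : delta w x ((π x)[j]'hj') < delta w x ((π x)[j + 1]) := by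
        rw [hstep x hx j hj]
        exact ENNReal.lt_add_right (hfin x hx j hj') (hw _ _)
      rcases Nat.lt_or_ge i j with h | h
      · exact (ih hj' h).trans hlt1
      · have hij' : i = j := by omega
        subst hij'; exact hlt1
  -- injectivity of vertices along π x
  have hinj : ∀ x (hx : delta w x c ≠ ⊤) (i j : ℕ) (hi : i < (π x).length)
      (hj : j < (π x).length), (π x)[i] = (π x)[j] → i = j := by
    intro x hx i j hi hj he
    rcases lt_trichotomy i j with h | h | h
    · exact absurd (congrArg (delta w x) he) (ne_of_lt (hlt x hx i j hj h))
    · exact h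
    · exact absurd (congrArg (delta w x) he).symm (ne_of_lt (hlt x hx j i hi h))
  -- segment lemma
  have hseg : ∀ x (hx : delta w x c ≠ ⊤) (i k : ℕ) (hik : i ≤ k) (hk : k < (π x).length),
      delta w x ((π x)[k]) =
        delta w x ((π x)[i]'(by omega)) + delta w ((π x)[i]'(by omega)) ((π x)[k]) := by
    intro x hx i k hik hk
    induction k with
    | zero =>
      have hie : i = 0 := by omega
      subst hie
      rw [delta_self, add_zero]
    | succ k ih =>
      have hi' : i < (π x).length := by omega
      rcases Nat.lt_or_ge i (k + 1) with h | h
      · have hik' : i ≤ k := by omega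
        have hk' : k < (π x).length := by omega
        have e1 := ih hik' hk'
        have e2 := hstep x hx k hk
        have e3 : delta w ((π x)[i]'hi') ((π x)[k + 1]) ≤
            delta w ((π x)[i]'hi') ((π x)[k]'hk') + w ((π x)[k]'hk') ((π x)[k + 1]) :=
          delta_triangle_edge w _ _ _
        have e4 : delta w x ((π x)[k + 1]) ≤
            delta w x ((π x)[i]'hi') + delta w ((π x)[i]'hi') ((π x)[k + 1]) :=
          delta_triangle w _ _ _
        have e5 : delta w x ((π x)[i]'hi') + delta w ((π x)[i]'hi') ((π x)[k + 1]) ≤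
            delta w x ((π x)[k + 1]) := by
          calc delta w x ((π x)[i]'hi') + delta w ((π x)[i]'hi') ((π x)[k + 1])
              ≤ delta w x ((π x)[i]'hi') +
                (delta w ((π x)[i]'hi') ((π x)[k]'hk') + w ((π x)[k]'hk') ((π x)[k + 1])) :=
                add_le_add_right e3 _
            _ = delta w x ((π x)[k]'hk') + w ((π x)[k]'hk') ((π x)[k + 1]) := by
                rw [← add_assoc, ← e1]
            _ = delta w x ((π x)[k + 1]) := e2.symm
        exact le_antisymm e4 e5
      · have hie : i = k + 1 := by omega
        subst hie
        rw [delta_self, add_zero]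
  -- predecessor lemma (relative to any earlier vertex z on the walk)
  have hpred : ∀ x (hx : delta w x c ≠ ⊤) (i k : ℕ) (hik : i ≤ k) (hk : k + 1 < (π x).length),
      IsLeast {u' : V |
          delta w ((π x)[i]'(by omega)) u' + w u' ((π x)[k + 1]) =
            delta w ((π x)[i]'(by omega)) ((π x)[k + 1])}
        ((π x)[k]'(by omega)) := by
    intro x hx i k hik hk
    have hk' : k < (π x).length := by omega
    have hi' : i < (π x).length := by omega
    have ht := htie x hx k hk
    simp only [List.get_eq_getElem] at ht
    have e1 := hseg x hx i k hik hk'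
    have e2 := hseg x hx i (k + 1) (by omega) hk
    have es := hstep x hx k hk
    have hfi := hfin x hx i hi'
    constructor
    · show delta w ((π x)[i]'hi') ((π x)[k]'hk') + w ((π x)[k]'hk') ((π x)[k + 1]) =
        delta w ((π x)[i]'hi') ((π x)[k + 1])
      have heq : delta w x ((π x)[i]'hi') +
          (delta w ((π x)[i]'hi') ((π x)[k]'hk') + w ((π x)[k]'hk') ((π x)[k + 1])) =
          delta w x ((π x)[i]'hi') + delta w ((π x)[i]'hi') ((π x)[k + 1]) := by
        rw [← add_assoc, ← e1, ← es, e2]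
      exact (ENNReal.add_right_inj hfi).mp heq
    · intro u' hu'
      simp only [Set.mem_setOf_eq] at hu'
      have hmem : delta w x u' + w u' ((π x)[k + 1]) = delta w x ((π x)[k + 1]) := by
        refine le_antisymm ?_ (delta_triangle_edge w x u' _)
        calc delta w x u' + w u' ((π x)[k + 1])
            ≤ (delta w x ((π x)[i]'hi') + delta w ((π x)[i]'hi') u') + w u' ((π x)[k + 1]) :=
              add_le_add_left (delta_triangle w x _ u') _
          _ = delta w x ((π x)[i]'hi') + (delta w ((π x)[i]'hi') u' + w u' ((π x)[k + 1])) :=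
              add_assoc _ _ _
          _ = delta w x ((π x)[i]'hi') + delta w ((π x)[i]'hi') ((π x)[k + 1]) := by rw [hu']
          _ = delta w x ((π x)[k + 1]) := e2.symm
      exact ht.2 hmem
  -- main suffix-agreement statement
  have main : ∀ x y (hx : delta w x c ≠ ⊤) (hy : delta w y c ≠ ⊤)
      (i : ℕ) (hix : i < (π x).length) (j : ℕ) (hjy : j < (π y).length),
      (π x)[i] = (π y)[j] → (π x).drop i = (π y).drop j := by
    intro x y hx hy i hix j hjy hz
    have claim : ∀ t, t < (π x).length - i → t < (π y).length - j →
        (π x)[(π x).length - 1 - t]'(by omega) = (π y)[(π y).length - 1 - t]'(by omega) := by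
      intro t
      induction t with
      | zero =>
        intro h1 h2
        simp only [Nat.sub_zero]
        rw [hlast x hx, hlast y hy]
      | succ t ih =>
        intro h1 h2
        have hkx : (π x).length - 1 - (t + 1) + 1 = (π x).length - 1 - t := by omega
        have hky : (π y).length - 1 - (t + 1) + 1 = (π y).length - 1 - t := by omega
        have px := hpred x hx i ((π x).length - 1 - (t + 1)) (by omega) (by omega)
        have py := hpred y hy j ((π y).length - 1 - (t + 1)) (by omega) (by omega)
        simp only [hkx] at px
        simp only [hky] at py
        have hsuc := ih (by omega) (by omega)
        rw [hz, hsuc] at px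
        exact px.unique py
    have hlen : (π x).length - i = (π y).length - j := by
      rcases Nat.le_total ((π x).length - i) ((π y).length - j) with h | h
      · have hcl := claim ((π x).length - i - 1) (by omega) (by omega)
        have hidx : (π x).length - 1 - ((π x).length - i - 1) = i := by omega
        simp only [hidx] at hcl
        have he : (π y)[j] = (π y)[(π y).length - 1 - ((π x).length - i - 1)]'(by omega) :=
          hz.symm.trans hcl
        have := hinj y hy j ((π y).length - 1 - ((π x).length - i - 1)) hjy (by omega) he
        omega
      · have hcl := claim ((π y).length - j - 1) (by omega) (by omega)
        have hidx : (π y).length - 1 - ((π y).length - j - 1) = j := by omega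
        simp only [hidx] at hcl
        have he : (π x)[(π x).length - 1 - ((π y).length - j - 1)]'(by omega) = (π x)[i] :=
          hcl.trans hz.symm
        have := hinj x hx ((π x).length - 1 - ((π y).length - j - 1)) i (by omega) hix he
        omega
    apply List.ext_getElem
    · simp only [List.length_drop]; omega
    · intro s h1 h2
      rw [List.getElem_drop, List.getElem_drop]
      have hs : s < (π x).length - i := by
        simpa using h1
      have e := claim ((π x).length - i - 1 - s) (by omega) (by omega)
      have ex : (π x).length - 1 - ((π x).length - i - 1 - s) = i + s := by omega
      have ey : (π y).length - 1 - ((π x).length - i - 1 - s) = j + s := by omega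
      simp only [ex, ey] at e
      exact e
  constructor
  · intro x y hx hy i hix j hjy hz
    simp only [List.get_eq_getElem] at hz
    exact main x y hx hy i hix j hjy hz
  · rintro a _ b₁ b₂ ⟨x, hx, hm1⟩ ⟨y, hy, hm2⟩
    obtain ⟨k, hk, he1⟩ := List.mem_iff_getElem.mp hm1
    obtain ⟨l, hl, he2⟩ := List.mem_iff_getElem.mp hm2
    have hk1 : k + 1 < (π x).length := by
      simp only [List.length_zipWith, List.length_tail] at hk; omega
    have hl1 : l + 1 < (π y).length := by
      simp only [List.length_zipWith, List.length_tail] at hl; omega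
    rw [List.getElem_zipWith] at he1 he2
    rw [List.getElem_tail] at he1 he2
    obtain ⟨ha1, hb1⟩ := Prod.mk.injEq .. ▸ he1
    obtain ⟨ha2, hb2⟩ := Prod.mk.injEq .. ▸ he2
    have hdrop := main x y hx hy k (by omega) l (by omega) (ha1.trans ha2.symm)
    have e : ((π x).drop k)[1]'(by simp only [List.length_drop]; omega) =
        ((π y).drop l)[1]'(by simp only [List.length_drop]; omega) := by
      simp only [hdrop]
    rw [List.getElem_drop, List.getElem_drop] at e
    exact hb1.symm.trans (e.trans hb2)
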